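/- Let A be a quadruplet of points with quadrant wedges covering the plane as in the connected-coverage construction, and let H be a closed half-plane containing A, bounded by a line ℓ with the complementary half-plane H'. Then either there exist two points of A whose wedges jointly cover H', or there exists a point a ∈ A whose wedge W_a intersected with H' leaves exactly two connected complementary regions T_a and B_a within H' (i.e., W_a divides H' into W_a ∩ H', T_a, B_a), and the two points of A coupled with a cover T_a and B_a respectively. -/

import Mathlib

open Real Complex

/-- The wedge (directional-antenna coverage region) with apex `p`, orientation `θ`
and angle `α`. -/
def Wedge (p : ℂ) (θ α : ℝ) : Set ℂ :=
  {x | ∃ r : ℝ, 0 ≤ r ∧ ∃ t ∈ Set.Icc 0 α,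
    x = p + (r : ℂ) * Complex.exp ((θ + t : ℝ) * Complex.I)}

/-- real dot product on ℂ -/
def dd (z v : ℂ) : ℝ := (z * (starRingEnd ℂ) v).re

lemma dd_def (z v : ℂ) : dd z v = z.re * v.re + z.im * v.im := by
  simp [dd, Complex.mul_re, Complex.conj_re, Complex.conj_im]

lemma dd_exp (z : ℂ) (t : ℝ) :
    dd z (Complex.exp (t * Complex.I)) = z.re * Real.cos t + z.im * Real.sin t := by
  simp [dd_def, Complex.exp_ofReal_mul_I_re, Complex.exp_ofReal_mul_I_im]

lemma dd_I_exp (z : ℂ) (t : ℝ) :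
    dd z (Complex.I * Complex.exp (t * Complex.I))
      = -(z.re * Real.sin t) + z.im * Real.cos t := by
  simp [dd_def, Complex.mul_re, Complex.mul_im, Complex.exp_ofReal_mul_I_re,
    Complex.exp_ofReal_mul_I_im]

lemma exp_neg_re (t : ℝ) : (Complex.exp (-((t:ℂ) * Complex.I))).re = Real.cos t := by
  rw [show -((t:ℂ) * Complex.I) = ((-t : ℝ) : ℂ) * Complex.I by push_cast; ring,
    Complex.exp_ofReal_mul_I_re, Real.cos_neg]

lemma exp_neg_im (t : ℝ) : (Complex.exp (-((t:ℂ) * Complex.I))).im = -Real.sin t := by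
  rw [show -((t:ℂ) * Complex.I) = ((-t : ℝ) : ℂ) * Complex.I by push_cast; ring,
    Complex.exp_ofReal_mul_I_im, Real.sin_neg]

lemma exp_mul_exp_neg (t : ℝ) :
    Complex.exp ((t:ℂ) * Complex.I) * Complex.exp (-((t:ℂ) * Complex.I)) = 1 := by
  rw [← Complex.exp_add]
  ring_nf
  exact Complex.exp_zero

lemma wedge_eq (p : ℂ) (t : ℝ) :
    Wedge p t (π/2) = {x : ℂ | 0 ≤ dd (x - p) (Complex.exp (t * Complex.I)) ∧
      0 ≤ dd (x - p) (Complex.I * Complex.exp (t * Complex.I))} := by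
  ext x
  constructor
  · rintro ⟨r, hr, s, ⟨hs0, hs1⟩, hx⟩
    have hxp : x - p = (r : ℂ) * Complex.exp ((t + s : ℝ) * Complex.I) := by
      rw [hx]; ring
    have hsplit : Complex.exp ((t + s : ℝ) * Complex.I)
        = Complex.exp ((t:ℝ) * Complex.I) * Complex.exp ((s:ℝ) * Complex.I) := by
      rw [← Complex.exp_add]; push_cast; ring_nf
    constructor
    · rw [hxp, hsplit]
      have heq : dd ((r : ℂ) * (Complex.exp ((t:ℝ) * Complex.I) * Complex.exp ((s:ℝ) * Complex.I)))
          (Complex.exp ((t:ℝ) * Complex.I)) = r * Real.cos s := by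
        simp only [dd_def, Complex.mul_re, Complex.mul_im, Complex.exp_ofReal_mul_I_re,
          Complex.exp_ofReal_mul_I_im, Complex.ofReal_re, Complex.ofReal_im]
        linear_combination (r * Real.cos s) * (Real.sin_sq_add_cos_sq t)
      rw [heq]
      have := Real.cos_nonneg_of_mem_Icc (x := s) ⟨by linarith [Real.pi_pos], hs1⟩
      positivity
    · rw [hxp, hsplit]
      have heq : dd ((r : ℂ) * (Complex.exp ((t:ℝ) * Complex.I) * Complex.exp ((s:ℝ) * Complex.I)))
          (Complex.I * Complex.exp ((t:ℝ) * Complex.I)) = r * Real.sin s := by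
        simp only [dd_def, Complex.mul_re, Complex.mul_im, Complex.exp_ofReal_mul_I_re,
          Complex.exp_ofReal_mul_I_im, Complex.ofReal_re, Complex.ofReal_im,
          Complex.I_re, Complex.I_im]
        linear_combination (r * Real.sin s) * (Real.sin_sq_add_cos_sq t)
      rw [heq]
      have := Real.sin_nonneg_of_nonneg_of_le_pi hs0 (by linarith [Real.pi_pos] : s ≤ π)
      positivity
  · rintro ⟨h1, h2⟩
    set ζ : ℂ := (x - p) * Complex.exp (-((t:ℂ) * Complex.I)) with hζ
    have hζre : ζ.re = dd (x - p) (Complex.exp ((t:ℝ) * Complex.I)) := by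
      simp only [hζ, dd_def, Complex.mul_re, Complex.mul_im, exp_neg_re, exp_neg_im,
        Complex.exp_ofReal_mul_I_re, Complex.exp_ofReal_mul_I_im, Complex.sub_re, Complex.sub_im]
      ring
    have hζim : ζ.im = dd (x - p) (Complex.I * Complex.exp ((t:ℝ) * Complex.I)) := by
      simp only [hζ, dd_def, Complex.mul_re, Complex.mul_im, exp_neg_re, exp_neg_im,
        Complex.exp_ofReal_mul_I_re, Complex.exp_ofReal_mul_I_im, Complex.sub_re, Complex.sub_im,
        Complex.I_re, Complex.I_im]
      ring
    have hxp : x - p = ζ * Complex.exp ((t:ℂ) * Complex.I) := by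
      rw [hζ, mul_assoc, mul_comm (Complex.exp (-((t:ℂ) * Complex.I))), exp_mul_exp_neg, mul_one]
    by_cases hz : ζ = 0
    · refine ⟨0, le_refl 0, 0, ⟨le_refl 0, by positivity⟩, ?_⟩
      have hx0 : x = p := by
        have h := hxp; rw [hz, zero_mul] at h
        linear_combination h
      rw [hx0]; simp
    · refine ⟨‖ζ‖, norm_nonneg ζ, ζ.arg, ⟨?_, ?_⟩, ?_⟩
      · rw [Complex.arg_nonneg_iff, hζim]; exact h2
      · have habs : |ζ.arg| ≤ π/2 := Complex.abs_arg_le_pi_div_two_iff.2 (by rw [hζre]; exact h1)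
        exact (abs_le.1 habs).2
      · have habs : (‖ζ‖ : ℂ) * Complex.exp ((ζ.arg : ℝ) * Complex.I) = ζ :=
          Complex.norm_mul_exp_arg_mul_I ζ
        have hcast : ((t + ζ.arg : ℝ) : ℂ) * Complex.I
            = (t:ℂ) * Complex.I + (ζ.arg : ℝ) * Complex.I := by push_cast; ring
        rw [hcast, Complex.exp_add]
        rw [show (p + (‖ζ‖ : ℂ) * (Complex.exp ((t:ℂ)*Complex.I) * Complex.exp ((ζ.arg:ℝ)*Complex.I))) = p + ((‖ζ‖ : ℂ) * Complex.exp ((ζ.arg:ℝ)*Complex.I)) * Complex.exp ((t:ℂ)*Complex.I) by ring]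
        rw [habs, ← hxp]; ring

lemma dd_add_smul (z w : ℂ) (τ : ℝ) (v : ℂ) :
    dd (z + τ • w) v = dd z v + τ * dd w v := by
  simp only [dd_def, Complex.add_re, Complex.add_im, Complex.smul_re, Complex.smul_im,
    smul_eq_mul]
  ring

lemma dd_smul (a : ℝ) (w v : ℂ) : dd (a • w) v = a * dd w v := by
  simp only [dd_def, Complex.smul_re, Complex.smul_im, smul_eq_mul]
  ring

lemma dd_pos_self {v : ℂ} (hv : v ≠ 0) : 0 < dd v v := by
  have h : v.re ≠ 0 ∨ v.im ≠ 0 := by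
    by_contra h; push_neg at h
    exact hv (Complex.ext h.1 h.2)
  rw [dd_def]
  rcases h with h | h
  · nlinarith [mul_self_pos.mpr h, mul_self_nonneg v.im]
  · nlinarith [mul_self_pos.mpr h, mul_self_nonneg v.re]

lemma halfplane_subset {v n : ℂ} (hv : v ≠ 0) (hn : n ≠ 0) {s s' : ℝ}
    (h : {z : ℂ | s ≤ dd z v} ⊆ {z : ℂ | s' ≤ dd z n}) :
    ∃ c : ℝ, 0 < c ∧ n = c • v := by
  have hvv : 0 < dd v v := dd_pos_self hv
  set z0 : ℂ := (s / dd v v) • v with hz0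
  have hz0v : dd z0 v = s := by
    rw [hz0, dd_smul, div_mul_cancel₀ _ (ne_of_gt hvv)]
  set d : ℂ := Complex.I * v with hd
  have hdv : dd d v = 0 := by
    simp [hd, dd_def, Complex.mul_re, Complex.mul_im]; ring
  have hmem : ∀ τ : ℝ, s ≤ dd (z0 + τ • d) v := by
    intro τ
    rw [dd_add_smul, hz0v, hdv, mul_zero, add_zero]
  have hdn : dd d n = 0 := by
    by_contra hdn
    have h1 := h (hmem ((s' - 1 - dd z0 n) / dd d n))
    rw [Set.mem_setOf_eq, dd_add_smul, div_mul_cancel₀ _ hdn] at h1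
    linarith
  have hkey : v.re * n.im - v.im * n.re = 0 := by
    rw [dd_def] at hdn
    simp only [hd, Complex.mul_re, Complex.mul_im, Complex.I_re, Complex.I_im] at hdn
    linarith [hdn]
  have hnc : n = (dd n v / dd v v) • v := by
    apply Complex.ext
    · simp only [Complex.smul_re, smul_eq_mul]
      rw [div_mul_eq_mul_div, eq_div_iff (ne_of_gt hvv), dd_def, dd_def]
      linear_combination (-v.im) * hkey
    · simp only [Complex.smul_im, smul_eq_mul]
      rw [div_mul_eq_mul_div, eq_div_iff (ne_of_gt hvv), dd_def, dd_def]
      linear_combination v.re * hkey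
  set c : ℝ := dd n v / dd v v with hc
  have hc0 : c ≠ 0 := by
    intro h0
    rw [h0, zero_smul] at hnc
    exact hn hnc
  rcases lt_or_gt_of_ne hc0 with hneg | hpos
  · exfalso
    have hvn : dd v n = c * dd v v := by
      rw [hnc]
      simp only [dd_def, Complex.smul_re, Complex.smul_im, smul_eq_mul]
      ring
    have hY : c * dd v v < 0 := mul_neg_of_neg_of_pos hneg hvv
    have hs'z0 : s' ≤ dd z0 n := by
      have := h (show z0 ∈ {z : ℂ | s ≤ dd z v} from by rw [Set.mem_setOf_eq, hz0v])
      exact this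
    set τ : ℝ := (dd z0 n - s' + 1) / (-(c * dd v v)) with hτ
    have hτpos : 0 ≤ τ := by
      apply div_nonneg (by linarith) (by linarith)
    have hmem2 : s ≤ dd (z0 + τ • v) v := by
      rw [dd_add_smul, hz0v]
      nlinarith [mul_nonneg hτpos (le_of_lt hvv)]
    have h2 := h hmem2
    rw [Set.mem_setOf_eq, dd_add_smul, hvn] at h2
    have hτv : τ * (c * dd v v) = -(dd z0 n - s' + 1) := by
      rw [hτ]
      field_simp
    linarith
  · exact ⟨c, hpos, hnc⟩

lemma dd_smul_right (a : ℝ) (z v : ℂ) : dd z (a • v) = a * dd z v := by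
  simp only [dd_def, Complex.smul_re, Complex.smul_im, smul_eq_mul]
  ring

lemma dd_basis_e (e : ℂ) (he : e.re^2 + e.im^2 = 1) (x0 y0 : ℝ) :
    dd (x0 • e + y0 • (Complex.I * e)) e = x0 := by
  simp only [dd_def, Complex.add_re, Complex.add_im, Complex.smul_re, Complex.smul_im,
    Complex.mul_re, Complex.mul_im, Complex.I_re, Complex.I_im, smul_eq_mul]
  linear_combination x0 * he

lemma dd_basis_ie (e : ℂ) (he : e.re^2 + e.im^2 = 1) (x0 y0 : ℝ) :
    dd (x0 • e + y0 • (Complex.I * e)) (Complex.I * e) = y0 := by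
  simp only [dd_def, Complex.add_re, Complex.add_im, Complex.smul_re, Complex.smul_im,
    Complex.mul_re, Complex.mul_im, Complex.I_re, Complex.I_im, smul_eq_mul]
  linear_combination y0 * he

lemma e_ne_zero {e : ℂ} (he : e.re^2 + e.im^2 = 1) : e ≠ 0 := by
  intro h0
  rw [h0] at he
  norm_num at he

lemma couple_ineq (e v : ℂ) (he : e.re^2 + e.im^2 = 1) (hv : v ≠ 0) (s a₁ b₁ a₂ b₂ : ℝ)
    (h : {z : ℂ | s ≤ dd z v} ⊆
      {z : ℂ | a₁ ≤ dd z e ∧ b₁ ≤ dd z (Complex.I * e)} ∪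
      {z : ℂ | dd z e ≤ a₂ ∧ b₂ ≤ dd z (Complex.I * e)}) : a₁ ≤ a₂ := by
  by_contra hcon
  push_neg at hcon
  have hne : Complex.I * e ≠ 0 := mul_ne_zero Complex.I_ne_zero (e_ne_zero he)
  have hsub2 : {z : ℂ | s ≤ dd z v} ⊆ {z : ℂ | min b₁ b₂ ≤ dd z (Complex.I * e)} := by
    intro z hz
    rcases h hz with ⟨_, h2⟩ | ⟨_, h2⟩
    · exact le_trans (min_le_left _ _) h2
    · exact le_trans (min_le_right _ _) h2
  obtain ⟨c, hc, hce⟩ := halfplane_subset hv hne hsub2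
  set x0 : ℝ := (a₁ + a₂) / 2 with hx0
  set y0 : ℝ := max (max b₁ b₂) (c * s) with hy0
  set z : ℂ := x0 • e + y0 • (Complex.I * e) with hz
  have hze : dd z e = x0 := dd_basis_e e he x0 y0
  have hzi : dd z (Complex.I * e) = y0 := dd_basis_ie e he x0 y0
  have hzmem : z ∈ {z : ℂ | s ≤ dd z v} := by
    rw [Set.mem_setOf_eq]
    have : c * dd z v = y0 := by rw [← hzi, hce, dd_smul_right]
    have hcs : c * s ≤ c * dd z v := by
      rw [this]; exact le_max_right _ _
    exact (mul_le_mul_iff_of_pos_left hc).mp hcs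
  rcases h hzmem with ⟨h1, _⟩ | ⟨h1, _⟩
  · rw [hze] at h1; rw [hx0] at h1; linarith
  · rw [hze] at h1; rw [hx0] at h1; linarith

lemma couple_ineq' (e v : ℂ) (he : e.re^2 + e.im^2 = 1) (hv : v ≠ 0) (s a₁ b₁ a₂ b₂ : ℝ)
    (h : {z : ℂ | s ≤ dd z v} ⊆
      {z : ℂ | dd z (Complex.I * e) ≤ b₁ ∧ a₁ ≤ dd z e} ∪
      {z : ℂ | a₂ ≤ dd z e ∧ b₂ ≤ dd z (Complex.I * e)}) : b₂ ≤ b₁ := by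
  by_contra hcon
  push_neg at hcon
  have hsub2 : {z : ℂ | s ≤ dd z v} ⊆ {z : ℂ | min a₁ a₂ ≤ dd z e} := by
    intro z hz
    rcases h hz with ⟨_, h2⟩ | ⟨h2, _⟩
    · exact le_trans (min_le_left _ _) h2
    · exact le_trans (min_le_right _ _) h2
  obtain ⟨c, hc, hce⟩ := halfplane_subset hv (e_ne_zero he) hsub2
  set x0 : ℝ := max (max a₁ a₂) (c * s) with hx0
  set y0 : ℝ := (b₁ + b₂) / 2 with hy0
  set z : ℂ := x0 • e + y0 • (Complex.I * e) with hz
  have hze : dd z e = x0 := dd_basis_e e he x0 y0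
  have hzi : dd z (Complex.I * e) = y0 := dd_basis_ie e he x0 y0
  have hzmem : z ∈ {z : ℂ | s ≤ dd z v} := by
    rw [Set.mem_setOf_eq]
    have : c * dd z v = x0 := by rw [← hze, hce, dd_smul_right]
    have hcs : c * s ≤ c * dd z v := by
      rw [this]; exact le_max_right _ _
    exact (mul_le_mul_iff_of_pos_left hc).mp hcs
  rcases h hzmem with ⟨h1, _⟩ | ⟨_, h1⟩
  · rw [hzi] at h1; rw [hy0] at h1; linarith
  · rw [hzi] at h1; rw [hy0] at h1; linarith

lemma dd_sub (x p v : ℂ) : dd (x - p) v = dd x v - dd p v := by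
  simp only [dd_def, Complex.sub_re, Complex.sub_im]; ring

lemma dd_neg_right (z v : ℂ) : dd z (-v) = -dd z v := by
  simp only [dd_def, Complex.neg_re, Complex.neg_im]; ring

lemma exp_pi_half : Complex.exp ((↑π/2) * Complex.I) = Complex.I := by
  rw [show ((↑π/2 : ℂ)) = ((π/2 : ℝ) : ℂ) by push_cast; ring, Complex.exp_mul_I,
    ← Complex.ofReal_cos, ← Complex.ofReal_sin, Real.cos_pi_div_two, Real.sin_pi_div_two]
  simp

lemma exp_neg_pi_half : Complex.exp (-(↑π/2) * Complex.I) = -Complex.I := by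
  rw [show (-(↑π/2 : ℂ)) = ((-(π/2) : ℝ) : ℂ) by push_cast; ring, Complex.exp_mul_I,
    ← Complex.ofReal_cos, ← Complex.ofReal_sin, Real.cos_neg, Real.sin_neg,
    Real.cos_pi_div_two, Real.sin_pi_div_two]
  simp

lemma exp_two_pi_int (m : ℤ) : Complex.exp (((2*π*m : ℝ) : ℂ) * Complex.I) = 1 := by
  rw [show (((2*π*m : ℝ) : ℂ) * Complex.I) = (m : ℂ) * (2*(π:ℂ)*Complex.I) by push_cast; ring]
  exact Complex.exp_int_mul_two_pi_mul_I m

lemma exp_quarter {t t' : ℝ} (m : ℤ) (h : t' - t = π/2 + 2*π*m) :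
    Complex.exp ((t' : ℝ) * Complex.I) = Complex.I * Complex.exp ((t : ℝ) * Complex.I) := by
  have ht' : t' = t + π/2 + 2*π*m := by linarith
  rw [ht']
  rw [show (((t + π/2 + 2*π*m : ℝ)) : ℂ) * Complex.I
    = (t:ℂ) * Complex.I + (↑π/2) * Complex.I + ((2*π*m : ℝ) : ℂ) * Complex.I by push_cast; ring]
  rw [Complex.exp_add, Complex.exp_add, exp_pi_half, exp_two_pi_int]
  ring

lemma exp_negquarter {t t' : ℝ} (m : ℤ) (h : t' - t = -(π/2) + 2*π*m) :
    Complex.exp ((t' : ℝ) * Complex.I) = -(Complex.I * Complex.exp ((t : ℝ) * Complex.I)) := by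
  have ht' : t' = t + -(π/2) + 2*π*m := by linarith
  rw [ht']
  rw [show (((t + -(π/2) + 2*π*m : ℝ)) : ℂ) * Complex.I
    = (t:ℂ) * Complex.I + (-(↑π/2)) * Complex.I + ((2*π*m : ℝ) : ℂ) * Complex.I by push_cast; ring]
  rw [Complex.exp_add, Complex.exp_add, exp_neg_pi_half, exp_two_pi_int]
  ring

lemma wedge_eq' (p : ℂ) (t : ℝ) :
    Wedge p t (π/2) = {x : ℂ |
      dd p (Complex.exp (t * Complex.I)) ≤ dd x (Complex.exp (t * Complex.I)) ∧
      dd p (Complex.I * Complex.exp (t * Complex.I)) ≤ dd x (Complex.I * Complex.exp (t * Complex.I))} := by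
  rw [wedge_eq]
  ext x
  simp only [Set.mem_setOf_eq, dd_sub]
  constructor <;> rintro ⟨h1, h2⟩ <;> constructor <;> linarith

lemma wedge_quarter (p : ℂ) {t t' : ℝ} (m : ℤ) (h : t' - t = π/2 + 2*π*m) :
    Wedge p t' (π/2) = {x : ℂ |
      dd x (Complex.exp (t * Complex.I)) ≤ dd p (Complex.exp (t * Complex.I)) ∧
      dd p (Complex.I * Complex.exp (t * Complex.I)) ≤ dd x (Complex.I * Complex.exp (t * Complex.I))} := by
  rw [wedge_eq, exp_quarter m h]
  ext x
  rw [show Complex.I * (Complex.I * Complex.exp ((t:ℝ) * Complex.I))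
    = -(Complex.exp ((t:ℝ) * Complex.I)) by rw [← mul_assoc, Complex.I_mul_I]; ring]
  simp only [Set.mem_setOf_eq, dd_sub, dd_neg_right]
  constructor <;> rintro ⟨h1, h2⟩ <;> constructor <;> linarith

lemma wedge_negquarter (p : ℂ) {t t' : ℝ} (m : ℤ) (h : t' - t = -(π/2) + 2*π*m) :
    Wedge p t' (π/2) = {x : ℂ |
      dd x (Complex.I * Complex.exp (t * Complex.I)) ≤ dd p (Complex.I * Complex.exp (t * Complex.I)) ∧
      dd p (Complex.exp (t * Complex.I)) ≤ dd x (Complex.exp (t * Complex.I))} := by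
  rw [wedge_eq, exp_negquarter m h]
  ext x
  rw [show Complex.I * (-(Complex.I * Complex.exp ((t:ℝ) * Complex.I)))
    = Complex.exp ((t:ℝ) * Complex.I) by rw [show Complex.I * -(Complex.I * Complex.exp ((t:ℝ)*Complex.I)) = -(Complex.I*Complex.I)*Complex.exp ((t:ℝ)*Complex.I) by ring, Complex.I_mul_I]; ring]
  simp only [Set.mem_setOf_eq, dd_sub, dd_neg_right]
  constructor <;> rintro ⟨h1, h2⟩ <;> constructor <;> linarith

lemma dd_comb (a b : ℝ) (x y v : ℂ) : dd (a • x + b • y) v = a * dd x v + b * dd y v := by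
  simp only [dd_def, Complex.add_re, Complex.add_im, Complex.smul_re, Complex.smul_im,
    smul_eq_mul]
  ring

lemma combo_lt {p q c a b : ℝ} (hp : p < c) (hq : q < c) (ha : 0 ≤ a) (hb : 0 ≤ b)
    (hab : a + b = 1) : a * p + b * q < c := by
  rcases eq_or_lt_of_le ha with h | h
  · rw [← h] at hab ⊢; simp at hab ⊢; rw [hab]; simpa using hq
  · have hc : a * c + b * c = c := by rw [← add_mul, hab, one_mul]
    have h1 := mul_lt_mul_of_pos_left hp h
    have h2 := mul_le_mul_of_nonneg_left hq.le hb
    linarith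

lemma combo_le {p q c a b : ℝ} (hp : c ≤ p) (hq : c ≤ q) (ha : 0 ≤ a) (hb : 0 ≤ b)
    (hab : a + b = 1) : c ≤ a * p + b * q := by
  have hc : a * c + b * c = c := by rw [← add_mul, hab, one_mul]
  have h1 := mul_le_mul_of_nonneg_left hp ha
  have h2 := mul_le_mul_of_nonneg_left hq hb
  linarith

lemma combo_le' {p q c a b : ℝ} (hp : p ≤ c) (hq : q ≤ c) (ha : 0 ≤ a) (hb : 0 ≤ b)
    (hab : a + b = 1) : a * p + b * q ≤ c := by
  have hc : a * c + b * c = c := by rw [← add_mul, hab, one_mul]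
  have h1 := mul_le_mul_of_nonneg_left hp ha
  have h2 := mul_le_mul_of_nonneg_left hq hb
  linarith

theorem engine (A : Fin 4 → ℂ) (θ : Fin 4 → ℝ) (u : ℂ) (hu : u ≠ 0) (r : ℝ)
    (i j k : Fin 4) (hji : j ≠ i) (hki : k ≠ i) (hjk : j ≠ k)
    (hAH : ∀ i, (A i * (starRingEnd ℂ) u).re ≤ r)
    (hcouple : ∀ i j, (∃ k : ℤ, θ j - θ i = π / 2 + 2 * π * k) →
      ∃ (v : ℂ) (s : ℝ), v ≠ 0 ∧ {x : ℂ | s ≤ (x * (starRingEnd ℂ) v).re} ⊆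
        Wedge (A i) (θ i) (π / 2) ∪ Wedge (A j) (θ j) (π / 2))
    (hj : ∃ m : ℤ, θ j - θ i = π/2 + 2*π*m)
    (hk : ∃ m : ℤ, θ k - θ i = -(π/2) + 2*π*m)
    (hwre : 0 ≤ dd u (Complex.exp (θ i * Complex.I)))
    (hwim : 0 ≤ dd u (Complex.I * Complex.exp (θ i * Complex.I))) :
    (∃ i j, i ≠ j ∧ {x : ℂ | r ≤ (x * (starRingEnd ℂ) u).re} ⊆
        Wedge (A i) (θ i) (π / 2) ∪ Wedge (A j) (θ j) (π / 2)) ∨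
    (∃ i, ∃ T Bm : Set ℂ, T.Nonempty ∧ Bm.Nonempty ∧ IsConnected T ∧ IsConnected Bm ∧
      Disjoint T Bm ∧
      T ∪ Bm = {x : ℂ | r ≤ (x * (starRingEnd ℂ) u).re} \ Wedge (A i) (θ i) (π / 2) ∧
      ∃ j k, j ≠ i ∧ k ≠ i ∧ j ≠ k ∧
        (∃ m : ℤ, θ j - θ i = π / 2 + 2 * π * m) ∧
        (∃ m : ℤ, θ k - θ i = -(π / 2) + 2 * π * m) ∧
        T ⊆ Wedge (A j) (θ j) (π / 2) ∧ Bm ⊆ Wedge (A k) (θ k) (π / 2)) := by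
  set e : ℂ := Complex.exp ((θ i : ℝ) * Complex.I) with hedef
  have he : e.re^2 + e.im^2 = 1 := by
    rw [hedef, Complex.exp_ofReal_mul_I_re, Complex.exp_ofReal_mul_I_im]
    linarith [Real.sin_sq_add_cos_sq (θ i)]
  have hdecomp : ∀ z : ℂ, dd z u
      = dd z e * dd u e + dd z (Complex.I * e) * dd u (Complex.I * e) := by
    intro z
    simp only [dd_def, Complex.mul_re, Complex.mul_im, Complex.I_re, Complex.I_im]
    linear_combination (-(z.re * u.re + z.im * u.im)) * he
  have hddu : ∀ z : ℂ, (z * (starRingEnd ℂ) u).re = dd z u := fun z => rfl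
  have hune : dd u e ≠ 0 ∨ dd u (Complex.I * e) ≠ 0 := by
    by_contra hcon
    push_neg at hcon
    obtain ⟨h1, h2⟩ := hcon
    rw [dd_def] at h1 h2
    simp only [Complex.mul_re, Complex.mul_im, Complex.I_re, Complex.I_im] at h2
    apply hu
    apply Complex.ext
    · rw [Complex.zero_re]
      linear_combination e.re * h1 - e.im * h2 - u.re * he
    · rw [Complex.zero_im]
      linear_combination e.im * h1 + e.re * h2 - u.im * he
  -- couple inequalities
  obtain ⟨m1, hm1⟩ := hj
  obtain ⟨v1, s1, hv1, hsub1⟩ := hcouple i j ⟨m1, hm1⟩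
  rw [wedge_eq' (A i) (θ i), wedge_quarter (A j) m1 hm1] at hsub1
  have hXij : dd (A i) e ≤ dd (A j) e :=
    couple_ineq e v1 he hv1 s1 _ _ _ _ hsub1
  obtain ⟨m2, hm2⟩ := hk
  obtain ⟨v2, s2, hv2, hsub2⟩ := hcouple k i ⟨-m2, by push_cast; linarith⟩
  rw [wedge_negquarter (A k) m2 hm2, wedge_eq' (A i) (θ i)] at hsub2
  have hYki : dd (A i) (Complex.I * e) ≤ dd (A k) (Complex.I * e) :=
    couple_ineq' e v2 he hv2 s2 _ _ _ _ hsub2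
  rcases eq_or_lt_of_le hwre with hwr0 | hwrpos
  · -- dd u e = 0, so dd u (I e) > 0 : left case with (i, j)
    have hwipos : 0 < dd u (Complex.I * e) := by
      rcases hune with h | h
      · exact absurd hwr0.symm h
      · exact lt_of_le_of_ne hwim (Ne.symm h)
    left
    refine ⟨i, j, Ne.symm hji, ?_⟩
    rw [wedge_eq' (A i) (θ i), wedge_quarter (A j) m1 hm1]
    intro z hz
    rw [Set.mem_setOf_eq, hddu, hdecomp z, ← hwr0] at hz
    have hzY : ∀ w : Fin 4, dd (A w) (Complex.I * e) * dd u (Complex.I * e)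
        ≤ dd z (Complex.I * e) * dd u (Complex.I * e) := by
      intro w
      have hA := hAH w
      rw [hddu, hdecomp (A w), ← hwr0] at hA
      calc dd (A w) (Complex.I * e) * dd u (Complex.I * e)
          = dd (A w) e * 0 + dd (A w) (Complex.I * e) * dd u (Complex.I * e) := by ring
        _ ≤ r := hA
        _ ≤ dd z e * 0 + dd z (Complex.I * e) * dd u (Complex.I * e) := hz
        _ = dd z (Complex.I * e) * dd u (Complex.I * e) := by ring
    have hzYi : dd (A i) (Complex.I * e) ≤ dd z (Complex.I * e) :=
      le_of_mul_le_mul_right (hzY i) hwipos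
    have hzYj : dd (A j) (Complex.I * e) ≤ dd z (Complex.I * e) :=
      le_of_mul_le_mul_right (hzY j) hwipos
    by_cases hX : dd (A i) e ≤ dd z e
    · exact Or.inl ⟨hX, hzYi⟩
    · push_neg at hX
      exact Or.inr ⟨by linarith, hzYj⟩
  · rcases eq_or_lt_of_le hwim with hwi0 | hwipos
    · -- dd u (I e) = 0, dd u e > 0 : left case with (i, k)
      left
      refine ⟨i, k, Ne.symm hki, ?_⟩
      rw [wedge_eq' (A i) (θ i), wedge_negquarter (A k) m2 hm2]
      intro z hz
      rw [Set.mem_setOf_eq, hddu, hdecomp z, ← hwi0] at hz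
      have hzX : ∀ w : Fin 4, dd (A w) e * dd u e ≤ dd z e * dd u e := by
        intro w
        have hA := hAH w
        rw [hddu, hdecomp (A w), ← hwi0] at hA
        calc dd (A w) e * dd u e
            = dd (A w) e * dd u e + dd (A w) (Complex.I * e) * 0 := by ring
          _ ≤ r := hA
          _ ≤ dd z e * dd u e + dd z (Complex.I * e) * 0 := hz
          _ = dd z e * dd u e := by ring
      have hzXi : dd (A i) e ≤ dd z e := le_of_mul_le_mul_right (hzX i) hwrpos
      have hzXk : dd (A k) e ≤ dd z e := le_of_mul_le_mul_right (hzX k) hwrpos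
      by_cases hY : dd (A i) (Complex.I * e) ≤ dd z (Complex.I * e)
      · exact Or.inl ⟨hzXi, hY⟩
      · push_neg at hY
        exact Or.inr ⟨by linarith, hzXk⟩
    · -- main case: dd u e > 0 and dd u (I e) > 0
      right
      set T : Set ℂ := {z : ℂ | r ≤ (z * (starRingEnd ℂ) u).re ∧ dd z e < dd (A i) e}
        with hT
      set Bm : Set ℂ := {z : ℂ | r ≤ (z * (starRingEnd ℂ) u).re ∧ dd (A i) e ≤ dd z e ∧
        dd z (Complex.I * e) < dd (A i) (Complex.I * e)} with hBm
      have hTmem : ∀ z : ℂ, z ∈ T ↔ (r ≤ dd z u ∧ dd z e < dd (A i) e) := by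
        intro z; rw [hT, Set.mem_setOf_eq, hddu]
      have hBmem : ∀ z : ℂ, z ∈ Bm ↔ (r ≤ dd z u ∧ dd (A i) e ≤ dd z e ∧
          dd z (Complex.I * e) < dd (A i) (Complex.I * e)) := by
        intro z; rw [hBm, Set.mem_setOf_eq, hddu]
      have hTne : T.Nonempty := by
        set x0 : ℝ := dd (A i) e - 1 with hx0
        set y0 : ℝ := (r - x0 * dd u e) / dd u (Complex.I * e) with hy0
        refine ⟨x0 • e + y0 • (Complex.I * e), ?_⟩
        rw [hTmem]
        constructor
        · rw [hdecomp, dd_basis_e e he, dd_basis_ie e he, hy0]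
          rw [div_mul_cancel₀ _ (ne_of_gt hwipos)]
          linarith
        · rw [dd_basis_e e he]; linarith
      have hBne : Bm.Nonempty := by
        set y0 : ℝ := dd (A i) (Complex.I * e) - 1 with hy0
        set x0 : ℝ := max (dd (A i) e) ((r - y0 * dd u (Complex.I * e)) / dd u e) with hx0
        refine ⟨x0 • e + y0 • (Complex.I * e), ?_⟩
        rw [hBmem]
        refine ⟨?_, ?_, ?_⟩
        · rw [hdecomp, dd_basis_e e he, dd_basis_ie e he]
          have h1 : (r - y0 * dd u (Complex.I * e)) / dd u e ≤ x0 := le_max_right _ _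
          have h2 : ((r - y0 * dd u (Complex.I * e)) / dd u e) * dd u e ≤ x0 * dd u e :=
            mul_le_mul_of_nonneg_right h1 (le_of_lt hwrpos)
          rw [div_mul_cancel₀ _ (ne_of_gt hwrpos)] at h2
          linarith
        · rw [dd_basis_e e he]; exact le_max_left _ _
        · rw [dd_basis_ie e he]; linarith
      have hTconv : Convex ℝ T := by
        intro x hx y hy a b ha hb hab
        rw [hTmem] at hx hy ⊢
        constructor
        · rw [dd_comb]; exact combo_le hx.1 hy.1 ha hb hab
        · rw [dd_comb]; exact combo_lt hx.2 hy.2 ha hb hab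
      have hBconv : Convex ℝ Bm := by
        intro x hx y hy a b ha hb hab
        rw [hBmem] at hx hy ⊢
        constructor
        · rw [dd_comb]; exact combo_le hx.1 hy.1 ha hb hab
        · constructor
          · rw [dd_comb]; exact combo_le hx.2.1 hy.2.1 ha hb hab
          · rw [dd_comb]; exact combo_lt hx.2.2 hy.2.2 ha hb hab
      refine ⟨i, T, Bm, hTne, hBne, hTconv.isConnected hTne, hBconv.isConnected hBne,
        ?_, ?_, j, k, hji, hki, hjk, ⟨m1, hm1⟩, ⟨m2, hm2⟩, ?_, ?_⟩
      · -- disjoint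
        rw [Set.disjoint_left]
        intro z hz1 hz2
        rw [hTmem] at hz1
        rw [hBmem] at hz2
        linarith [hz1.2, hz2.2.1]
      · -- union
        rw [wedge_eq' (A i) (θ i)]
        ext z
        simp only [Set.mem_union, Set.mem_diff, Set.mem_setOf_eq]
        rw [hTmem, hBmem, hddu]
        constructor
        · rintro (⟨h1, h2⟩ | ⟨h1, h2, h3⟩)
          · exact ⟨h1, fun hw => by linarith [hw.1]⟩
          · exact ⟨h1, fun hw => by linarith [hw.2]⟩
        · rintro ⟨h1, h2⟩
          by_cases hX : dd z e < dd (A i) e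
          · exact Or.inl ⟨h1, hX⟩
          · push_neg at hX
            refine Or.inr ⟨h1, hX, ?_⟩
            by_contra hY
            push_neg at hY
            exact h2 ⟨hX, hY⟩
      · -- T ⊆ W j
        rw [wedge_quarter (A j) m1 hm1]
        intro z hz
        rw [hTmem] at hz
        obtain ⟨hz1, hz2⟩ := hz
        have hle : dd z e ≤ dd (A j) e := le_trans hz2.le hXij
        refine ⟨hle, ?_⟩
        have hA := hAH j
        rw [hddu, hdecomp] at hA
        rw [hdecomp] at hz1
        by_contra hcon
        push_neg at hcon
        nlinarith [mul_nonneg (le_of_lt hwrpos) (sub_nonneg.mpr hle),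
          mul_pos hwipos (sub_pos.mpr hcon)]
      · -- Bm ⊆ W k
        rw [wedge_negquarter (A k) m2 hm2]
        intro z hz
        rw [hBmem] at hz
        obtain ⟨hz1, hz2, hz3⟩ := hz
        have hle : dd z (Complex.I * e) ≤ dd (A k) (Complex.I * e) := le_trans hz3.le hYki
        refine ⟨hle, ?_⟩
        have hA := hAH k
        rw [hddu, hdecomp] at hA
        rw [hdecomp] at hz1
        by_contra hcon
        push_neg at hcon
        nlinarith [mul_nonneg (le_of_lt hwipos) (sub_nonneg.mpr hle),
          mul_pos hwrpos (sub_pos.mpr hcon)]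

/-- Let `A` be a quadruplet of points whose π/2-wedges cover the plane as
in the connected-coverage construction (orientations a common rotation of
{0, π/2, π, 3π/2}, each couple of wedges with orientations differing by π/2 covering a
closed half-plane), let `H = {x : ⟨x,u⟩ ≤ r}` be a closed half-plane containing `A`,
and let `H' = {x : ⟨x,u⟩ ≥ r}` be the complementary closed half-plane.  Then either two
points of `A` have wedges jointly covering `H'`, or there is `a = A i` such that
`H' \ W_a` splits into exactly two nonempty connected regions `T` and `Bm`
(so `H'` is divided into `W_a ∩ H'`, `T`, `Bm`) and the two points of `A` coupled
with `a` (orientations θ i + π/2 and θ i − π/2, mod 2π) cover `T` and `Bm`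
respectively. -/
theorem quadruplet_halfplane_division
    (A : Fin 4 → ℂ) (θ : Fin 4 → ℝ) (u : ℂ) (hu : u ≠ 0) (r : ℝ)
    (hAH : ∀ i, (A i * (starRingEnd ℂ) u).re ≤ r)
    (hcov : (⋃ i, Wedge (A i) (θ i) (π / 2)) = Set.univ)
    (horient : ∃ (φ : ℝ) (σ : Equiv.Perm (Fin 4)), ∀ i, θ i = φ + (σ i : ℕ) * (π / 2))
    (hcouple : ∀ i j, (∃ k : ℤ, θ j - θ i = π / 2 + 2 * π * k) →
      ∃ (v : ℂ) (s : ℝ), v ≠ 0 ∧ {x : ℂ | s ≤ (x * (starRingEnd ℂ) v).re} ⊆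
        Wedge (A i) (θ i) (π / 2) ∪ Wedge (A j) (θ j) (π / 2)) :
    (∃ i j, i ≠ j ∧ {x : ℂ | r ≤ (x * (starRingEnd ℂ) u).re} ⊆
        Wedge (A i) (θ i) (π / 2) ∪ Wedge (A j) (θ j) (π / 2)) ∨
    (∃ i, ∃ T Bm : Set ℂ, T.Nonempty ∧ Bm.Nonempty ∧ IsConnected T ∧ IsConnected Bm ∧
      Disjoint T Bm ∧
      T ∪ Bm = {x : ℂ | r ≤ (x * (starRingEnd ℂ) u).re} \ Wedge (A i) (θ i) (π / 2) ∧
      ∃ j k, j ≠ i ∧ k ≠ i ∧ j ≠ k ∧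
        (∃ m : ℤ, θ j - θ i = π / 2 + 2 * π * m) ∧
        (∃ m : ℤ, θ k - θ i = -(π / 2) + 2 * π * m) ∧
        T ⊆ Wedge (A j) (θ j) (π / 2) ∧ Bm ⊆ Wedge (A k) (θ k) (π / 2)) := by
  obtain ⟨φ, σ, hσ⟩ := horient
  set zr : ℝ := u.re * Real.cos φ + u.im * Real.sin φ with hzr
  set zi : ℝ := -(u.re * Real.sin φ) + u.im * Real.cos φ with hzi
  have hθv : ∀ m : Fin 4, θ (σ.symm m) = φ + ((m : ℕ) : ℝ) * (π / 2) := by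
    intro m
    rw [hσ (σ.symm m), Equiv.apply_symm_apply]
  have hθ0 : θ (σ.symm 0) = φ + 0 * (π / 2) := by rw [hθv 0]; norm_num
  have hθ1 : θ (σ.symm 1) = φ + 1 * (π / 2) := by rw [hθv 1]; norm_num
  have hθ2 : θ (σ.symm 2) = φ + 2 * (π / 2) := by rw [hθv 2]; norm_num
  have hθ3 : θ (σ.symm 3) = φ + 3 * (π / 2) := by rw [hθv 3]; norm_num [show ((3:Fin 4):ℕ) = 3 from rfl]
  by_cases him : 0 ≤ zi
  · by_cases hre : 0 ≤ zr
    · -- m = 0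
      refine engine A θ u hu r (σ.symm 0) (σ.symm 1) (σ.symm 3)
        ((Equiv.injective σ.symm).ne (by decide)) ((Equiv.injective σ.symm).ne (by decide))
        ((Equiv.injective σ.symm).ne (by decide)) hAH hcouple
        ⟨0, ?_⟩ ⟨1, ?_⟩ ?_ ?_
      · rw [hθ1, hθ0]; push_cast; ring
      · rw [hθ3, hθ0]; push_cast; ring
      · rw [hθ0, dd_exp]; push_cast
        rw [show φ + 0 * (π/2) = φ by ring]
        linarith
      · rw [hθ0, dd_I_exp]; push_cast
        rw [show φ + 0 * (π/2) = φ by ring]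
        linarith
    · -- m = 1
      push_neg at hre
      refine engine A θ u hu r (σ.symm 1) (σ.symm 2) (σ.symm 0)
        ((Equiv.injective σ.symm).ne (by decide)) ((Equiv.injective σ.symm).ne (by decide))
        ((Equiv.injective σ.symm).ne (by decide)) hAH hcouple
        ⟨0, ?_⟩ ⟨0, ?_⟩ ?_ ?_
      · rw [hθ2, hθ1]; push_cast; ring
      · rw [hθ0, hθ1]; push_cast; ring
      · rw [hθ1, dd_exp]; push_cast
        rw [show φ + 1 * (π/2) = φ + π/2 by ring, Real.cos_add_pi_div_two,
          Real.sin_add_pi_div_two]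
        linarith
      · rw [hθ1, dd_I_exp]; push_cast
        rw [show φ + 1 * (π/2) = φ + π/2 by ring, Real.cos_add_pi_div_two,
          Real.sin_add_pi_div_two]
        linarith
  · push_neg at him
    by_cases hre : zr ≤ 0
    · -- m = 2
      refine engine A θ u hu r (σ.symm 2) (σ.symm 3) (σ.symm 1)
        ((Equiv.injective σ.symm).ne (by decide)) ((Equiv.injective σ.symm).ne (by decide))
        ((Equiv.injective σ.symm).ne (by decide)) hAH hcouple
        ⟨0, ?_⟩ ⟨0, ?_⟩ ?_ ?_
      · rw [hθ3, hθ2]; push_cast; ring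
      · rw [hθ1, hθ2]; push_cast; ring
      · rw [hθ2, dd_exp]; push_cast
        rw [show φ + 2 * (π/2) = φ + π by ring, Real.cos_add_pi, Real.sin_add_pi]
        linarith
      · rw [hθ2, dd_I_exp]; push_cast
        rw [show φ + 2 * (π/2) = φ + π by ring, Real.cos_add_pi, Real.sin_add_pi]
        linarith
    · -- m = 3
      push_neg at hre
      refine engine A θ u hu r (σ.symm 3) (σ.symm 0) (σ.symm 2)
        ((Equiv.injective σ.symm).ne (by decide)) ((Equiv.injective σ.symm).ne (by decide))
        ((Equiv.injective σ.symm).ne (by decide)) hAH hcouple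
        ⟨-1, ?_⟩ ⟨0, ?_⟩ ?_ ?_
      · rw [hθ0, hθ3]; push_cast; ring
      · rw [hθ2, hθ3]; push_cast; ring
      · rw [hθ3, dd_exp]; push_cast
        rw [show φ + 3 * (π/2) = (φ + π) + π/2 by ring, Real.cos_add_pi_div_two,
          Real.sin_add_pi_div_two, Real.cos_add_pi, Real.sin_add_pi]
        linarith
      · rw [hθ3, dd_I_exp]; push_cast
        rw [show φ + 3 * (π/2) = (φ + π) + π/2 by ring, Real.cos_add_pi_div_two,
          Real.sin_add_pi_div_two, Real.cos_add_pi, Real.sin_add_pi]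
        linarith
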